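/- If S and R are invertible normal bounded operators on a complex Hilbert space H, then for every bounded operator X on H, ‖S X R⁻¹‖ + ‖S⁻¹ X R‖ ≥ 2‖X‖. -/

import Mathlib

open ContinuousLinearMap

section aux
variable {H : Type*} [NormedAddCommGroup H] [InnerProductSpace ℂ H] [CompleteSpace H]

lemma agmi_norm_apply_star {N : H →L[ℂ] H} (hN : star N * N = N * star N) (v : H) :
    ‖N v‖ = ‖star N v‖ := by
  have h0 : (star N * N) v = (N * star N) v := by rw [hN]
  simp only [ContinuousLinearMap.mul_apply, star_eq_adjoint] at h0
  have h1 : (inner ℂ (N v) (N v) : ℂ) = inner ℂ (ContinuousLinearMap.adjoint N (N v)) v :=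
    (adjoint_inner_left N v (N v)).symm
  have h2 := adjoint_inner_left (ContinuousLinearMap.adjoint N) v
    (ContinuousLinearMap.adjoint N v)
  rw [adjoint_adjoint] at h2
  have h3 : (inner ℂ (N v) (N v) : ℂ)
      = inner ℂ (ContinuousLinearMap.adjoint N v) (ContinuousLinearMap.adjoint N v) := by
    rw [h1, h0, h2]
  rw [inner_self_eq_norm_sq_to_K, inner_self_eq_norm_sq_to_K] at h3
  have h4 : ‖N v‖ ^ 2 = ‖ContinuousLinearMap.adjoint N v‖ ^ 2 := by exact_mod_cast h3
  have := norm_nonneg (N v)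
  have := norm_nonneg (ContinuousLinearMap.adjoint N v)
  simp only [star_eq_adjoint]
  nlinarith [h4]

lemma agmi_norm_mul_left {N : H →L[ℂ] H} (hN : star N * N = N * star N) (A : H →L[ℂ] H) :
    ‖star N * A‖ = ‖N * A‖ := by
  refine le_antisymm ?_ ?_
  · refine opNorm_le_bound _ (norm_nonneg _) fun v => ?_
    rw [ContinuousLinearMap.mul_apply, ← agmi_norm_apply_star hN]
    exact le_opNorm (N * A) v
  · refine opNorm_le_bound _ (norm_nonneg _) fun v => ?_
    rw [ContinuousLinearMap.mul_apply, agmi_norm_apply_star hN]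
    exact le_opNorm (star N * A) v

lemma agmi_norm_mul_right {N : H →L[ℂ] H} (hN : star N * N = N * star N) (A : H →L[ℂ] H) :
    ‖A * star N‖ = ‖A * N‖ := by
  have hN' : star (star N) * star N = star N * star (star N) := by
    rw [star_star]; exact hN.symm
  calc ‖A * star N‖ = ‖star (A * star N)‖ := (norm_star _).symm
    _ = ‖star (star N) * star A‖ := by rw [star_mul]
    _ = ‖star N * star A‖ := agmi_norm_mul_left hN' (star A)
    _ = ‖star (star N * star A)‖ := (norm_star _).symm
    _ = ‖A * N‖ := by rw [star_mul, star_star, star_star]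

lemma agmi_inv_normal {N Ninv : H →L[ℂ] H} (h1 : N * Ninv = 1) (h2 : Ninv * N = 1)
    (hN : star N * N = N * star N) : star Ninv * Ninv = Ninv * star Ninv := by
  have hs1 : star Ninv * star N = 1 := by rw [← star_mul, h1, star_one]
  have hs2 : star N * star Ninv = 1 := by rw [← star_mul, h2, star_one]
  have ha : Ninv * star Ninv * (star N * N) = 1 := by
    rw [mul_assoc Ninv (star Ninv), ← mul_assoc (star Ninv), hs1, one_mul, h2]
  have hb : (star N * N) * (star Ninv * Ninv) = 1 := by
    rw [hN, mul_assoc N (star N), ← mul_assoc (star N), hs2, one_mul, h1]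
  calc star Ninv * Ninv = 1 * (star Ninv * Ninv) := (one_mul _).symm
    _ = (Ninv * star Ninv * (star N * N)) * (star Ninv * Ninv) := by rw [ha]
    _ = (Ninv * star Ninv) * ((star N * N) * (star Ninv * Ninv)) := by
        simp only [mul_assoc]
    _ = Ninv * star Ninv := by rw [hb, mul_one]

end aux

theorem normal_inv_agmi (H : Type*) [NormedAddCommGroup H] [InnerProductSpace ℂ H]
    [CompleteSpace H] (S R Sinv Rinv : H →L[ℂ] H)
    (hS1 : S * Sinv = 1) (hS2 : Sinv * S = 1)
    (hR1 : R * Rinv = 1) (hR2 : Rinv * R = 1)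
    (hS : (star S) * S = S * (star S)) (hR : (star R) * R = R * (star R))
    (X : H →L[ℂ] H) :
    ‖S * X * Rinv‖ + ‖Sinv * X * R‖ ≥ 2 * ‖X‖ := by
  by_cases hH : Subsingleton H
  · have hX : X = 0 := ContinuousLinearMap.ext fun x => Subsingleton.elim _ _
    rw [hX]
    simp only [norm_zero, mul_zero]
    positivity
  · have : Nontrivial H := not_subsingleton_iff_nontrivial.mp hH
    set A := S * X * Rinv with hA
    set B := Sinv * X * R with hB
    set C := R * (star X) * Sinv with hC
    -- ‖C‖ = ‖B‖
    have hSinv : star Sinv * Sinv = Sinv * star Sinv := agmi_inv_normal hS1 hS2 hS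
    have hCB : ‖C‖ = ‖B‖ := by
      calc ‖C‖ = ‖star C‖ := (norm_star _).symm
        _ = ‖star Sinv * (X * star R)‖ := by
            rw [hC, star_mul, star_mul, star_star]
        _ = ‖Sinv * (X * star R)‖ := agmi_norm_mul_left hSinv _
        _ = ‖(Sinv * X) * star R‖ := by rw [mul_assoc]
        _ = ‖(Sinv * X) * R‖ := agmi_norm_mul_right hR _
        _ = ‖B‖ := rfl
    -- C * A = R * (star X * X) * Rinv
    have hCA : C * A = R * (star X * X) * Rinv := by
      rw [hC, hA]
      simp only [mul_assoc]
      rw [← mul_assoc Sinv S, hS2, one_mul]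
    -- spectral radius argument
    have u : (H →L[ℂ] H)ˣ := ⟨R, Rinv, hR1, hR2⟩
    have hspec : spectrum ℂ (R * (star X * X) * Rinv) = spectrum ℂ (star X * X) :=
      spectrum.units_conjugate (u := ⟨R, Rinv, hR1, hR2⟩)
    have hsr : spectralRadius ℂ (R * (star X * X) * Rinv) = spectralRadius ℂ (star X * X) := by
      unfold spectralRadius
      rw [hspec]
    have h1 : (‖star X * X‖₊ : ENNReal) ≤ (‖C‖₊ * ‖A‖₊ : NNReal) := by
      calc (‖star X * X‖₊ : ENNReal) = spectralRadius ℂ (star X * X) :=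
            (IsSelfAdjoint.star_mul_self X).spectralRadius_eq_nnnorm.symm
        _ = spectralRadius ℂ (R * (star X * X) * Rinv) := hsr.symm
        _ = spectralRadius ℂ (C * A) := by rw [hCA]
        _ ≤ (‖C * A‖₊ : ENNReal) := spectrum.spectralRadius_le_nnnorm _
        _ ≤ ((‖C‖₊ * ‖A‖₊ : NNReal) : ENNReal) := by
            exact_mod_cast ENNReal.coe_le_coe.mpr (nnnorm_mul_le C A)
    have h2 : ‖X‖ * ‖X‖ ≤ ‖C‖ * ‖A‖ := by
      have h3 : ‖star X * X‖₊ ≤ ‖C‖₊ * ‖A‖₊ := ENNReal.coe_le_coe.mp h1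
      have h4 : ‖star X * X‖ ≤ ‖C‖ * ‖A‖ := by exact_mod_cast h3
      rwa [CStarRing.norm_star_mul_self] at h4
    rw [hCB] at h2
    have hAn := norm_nonneg A
    have hBn := norm_nonneg B
    have hXn := norm_nonneg X
    nlinarith [sq_nonneg (‖A‖ - ‖B‖), sq_nonneg (‖A‖ + ‖B‖ - 2 * ‖X‖), h2]
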